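/- If M = ∏_{j=1}^{k} F_j is a product of linear dual quaternion polynomials F_j = P_j + εD_j (with P_j linear quaternion polynomials) and N(P) = ∏ᵢ Nᵢ^{nᵢ} with Nᵢ coprime irreducible quadratics, then ∏ᵢ Nᵢ^{nᵢ−1} divides the norm polynomial N(M). -/

import Mathlib

open Polynomial TrivSqZeroExt Quaternion

noncomputable section

/-- the ring of dual numbers 𝔻 = ℝ[ε]/⟨ε²⟩ -/
abbrev DD : Type := DualNumber ℝ
/-- the Hamiltonian quaternions ℍ -/
abbrev HH : Type := Quaternion ℝ
/-- the dual quaternions 𝔻ℍ, realized as quaternions over the dual numbers -/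
abbrev DH : Type := Quaternion DD

/-- embedding of the real quaternions into the dual quaternions -/
def ofQ (p : HH) : DH := ⟨inl p.re, inl p.imI, inl p.imJ, inl p.imK⟩

/-- ε as a dual quaternion -/
def εq : DH := ((DualNumber.eps : DD) : DH)

/-- primal part of a dual quaternion -/
def primal (q : DH) : HH := ⟨(q.re).fst, (q.imI).fst, (q.imJ).fst, (q.imK).fst⟩

/-- dual part of a dual quaternion -/
def dualPart (q : DH) : HH := ⟨(q.re).snd, (q.imI).snd, (q.imJ).snd, (q.imK).snd⟩

/-- coefficientwise conjugate of a dual quaternion polynomial -/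
def pconj (M : Polynomial DH) : Polynomial DH := ∑ i ∈ M.support, C (star (M.coeff i)) * X ^ i

/-- coefficientwise conjugate of a quaternion polynomial -/
def qpconj (P : Polynomial HH) : Polynomial HH := ∑ i ∈ P.support, C (star (P.coeff i)) * X ^ i

/-- primal part of a dual quaternion polynomial -/
def Ppart (M : Polynomial DH) : Polynomial HH := ∑ i ∈ M.support, C (primal (M.coeff i)) * X ^ i

/-- dual part of a dual quaternion polynomial -/
def Dpart (M : Polynomial DH) : Polynomial HH := ∑ i ∈ M.support, C (dualPart (M.coeff i)) * X ^ i

/-- primal part of a dual number polynomial -/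
def dpr (p : Polynomial DD) : Polynomial ℝ := ∑ i ∈ p.support, C ((p.coeff i).fst) * X ^ i

/-- the dual number polynomial f + εg built from two real polynomials -/
def dpoly (f g : Polynomial ℝ) : Polynomial DD :=
  f.map (algebraMap ℝ DD) + (DualNumber.eps : DD) • g.map (algebraMap ℝ DD)

/-- embedding of quaternion polynomials into dual quaternion polynomials -/
def toDQp (P : Polynomial HH) : Polynomial DH := ∑ i ∈ P.support, C (ofQ (P.coeff i)) * X ^ i

/-- the quaternion unit i -/
def qi : HH := ⟨0, 1, 0, 0⟩
/-- the quaternion unit j -/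
def qj : HH := ⟨0, 0, 1, 0⟩
/-- the quaternion unit k -/
def qk : HH := ⟨0, 0, 0, 1⟩

section Aux

open TrivSqZeroExt Quaternion Polynomial

variable {A B : Type*}

instance instSAMDH : StarAddMonoid DH := StarRing.toStarAddMonoid (R := DH)
instance instSMDH : StarMul DH := StarRing.toStarMul (R := DH)

/-- coefficient of a support-sum polynomial -/
lemma coeff_supportSum [Semiring A] [Semiring B] (G : Polynomial A) (f : A → B)
    (hf : f 0 = 0) (n : ℕ) :
    (∑ i ∈ G.support, C (f (G.coeff i)) * X ^ i).coeff n = f (G.coeff n) := by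
  rw [Polynomial.finset_sum_coeff]
  simp only [Polynomial.C_mul_X_pow_eq_monomial, Polynomial.coeff_monomial]
  rw [Finset.sum_ite_eq' G.support n (fun i => f (G.coeff i))]
  split_ifs with h
  · rfl
  · rw [Polynomial.notMem_support_iff.mp h, hf]

lemma pconj_coeff (G : Polynomial DH) (n : ℕ) : (pconj G).coeff n = star (G.coeff n) :=
  coeff_supportSum G star (star_zero DH) n

lemma qpconj_coeff (G : Polynomial HH) (n : ℕ) : (qpconj G).coeff n = star (G.coeff n) :=
  coeff_supportSum G star (star_zero HH) n

lemma primal_zero : primal 0 = 0 := by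
  ext <;> simp [primal]

lemma Ppart_coeff (G : Polynomial DH) (n : ℕ) : (Ppart G).coeff n = primal (G.coeff n) :=
  coeff_supportSum G primal primal_zero n

/-- the primal part as a ring homomorphism -/
def primalHom : DH →+* HH where
  toFun := primal
  map_one' := by ext <;> simp [primal]
  map_zero' := primal_zero
  map_mul' q r := by
    ext <;> simp [primal, Quaternion.re_mul, Quaternion.imI_mul, Quaternion.imJ_mul,
      Quaternion.imK_mul]
    · exact (Quaternion.re_mul (primal q) (primal r)).symm
    · exact (Quaternion.imI_mul (primal q) (primal r)).symm
    · exact (Quaternion.imJ_mul (primal q) (primal r)).symm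
    · exact (Quaternion.imK_mul (primal q) (primal r)).symm
  map_add' q r := by ext <;> simp [primal] <;> rfl

lemma Ppart_eq_map (G : Polynomial DH) : Ppart G = G.map primalHom :=
  Polynomial.ext fun n => by rw [Ppart_coeff, Polynomial.coeff_map]; rfl

lemma primal_star (q : DH) : primal (star q) = star (primal q) := by
  ext <;> simp [primal]
  · exact (Quaternion.re_star (primal q)).symm
  · exact (Quaternion.imI_star (primal q)).symm
  · exact (Quaternion.imJ_star (primal q)).symm
  · exact (Quaternion.imK_star (primal q)).symm

lemma pconj_mul (f g : Polynomial DH) : pconj (f * g) = pconj g * pconj f := by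
  refine Polynomial.ext fun n => ?_
  rw [pconj_coeff, Polynomial.coeff_mul, Polynomial.coeff_mul,
    star_sum (Finset.HasAntidiagonal.antidiagonal n) (fun x => f.coeff x.1 * g.coeff x.2)]
  conv_rhs => rw [← Finset.HasAntidiagonal.map_swap_antidiagonal, Finset.sum_map]
  refine Finset.sum_congr rfl fun p _ => ?_
  simp only [Function.Embedding.coeFn_mk, Prod.fst_swap, Prod.snd_swap, pconj_coeff]
  exact star_mul (f.coeff p.1) (g.coeff p.2)

lemma pconj_one : pconj (1 : Polynomial DH) = 1 := by
  refine Polynomial.ext fun n => ?_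
  rw [pconj_coeff, Polynomial.coeff_one]
  split_ifs
  · exact star_one DH
  · exact star_zero DH

end Aux
section Aux2

open TrivSqZeroExt Quaternion Polynomial

lemma DD_eq_zero_of_eq_neg {x : DD} (h : x = -x) : x = 0 := by
  have h1 : fst x = -fst x := by rw [← fst_neg, ← h]
  have h2 : snd x = -snd x := by rw [← snd_neg, ← h]
  have e1 : fst x = 0 := by linarith
  have e2 : snd x = 0 := by linarith
  ext <;> simp [e1, e2]

lemma star_fixed_coe {a : DH} (h : star a = a) : a = ((a.re : DD) : DH) := by
  have h1 : a.imI = 0 := DD_eq_zero_of_eq_neg (by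
    conv_lhs => rw [← h]
    rfl)
  have h2 : a.imJ = 0 := DD_eq_zero_of_eq_neg (by
    conv_lhs => rw [← h]
    rfl)
  have h3 : a.imK = 0 := DD_eq_zero_of_eq_neg (by
    conv_lhs => rw [← h]
    rfl)
  ext <;> simp [h1, h2, h3]

/-- the scalar (real) part polynomial of a dual quaternion polynomial -/
def reP (G : Polynomial DH) : Polynomial DD :=
  ∑ i ∈ G.support, C ((G.coeff i).re) * X ^ i

lemma reP_coeff (G : Polynomial DH) (n : ℕ) : (reP G).coeff n = (G.coeff n).re :=
  coeff_supportSum G QuaternionAlgebra.re rfl n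

lemma norm_coeff_star_fixed (G : Polynomial DH) (n : ℕ) :
    star ((G * pconj G).coeff n) = (G * pconj G).coeff n := by
  rw [Polynomial.coeff_mul,
    star_sum (Finset.HasAntidiagonal.antidiagonal n) (fun x => G.coeff x.1 * (pconj G).coeff x.2)]
  conv_rhs => rw [← Finset.HasAntidiagonal.map_swap_antidiagonal, Finset.sum_map]
  refine Finset.sum_congr rfl fun p _ => ?_
  simp only [Function.Embedding.coeFn_mk, Prod.fst_swap, Prod.snd_swap, pconj_coeff]
  rw [star_mul (G.coeff p.1) (star (G.coeff p.2)), star_star (G.coeff p.2)]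

lemma normq_eq (G : Polynomial DH) :
    (reP (G * pconj G)).map (algebraMap DD DH) = G * pconj G := by
  refine Polynomial.ext fun n => ?_
  rw [Polynomial.coeff_map, reP_coeff]
  exact (star_fixed_coe (norm_coeff_star_fixed G n)).symm

lemma commute_mapDD (c : Polynomial DD) (x : Polynomial DH) :
    c.map (algebraMap DD DH) * x = x * c.map (algebraMap DD DH) := by
  refine Polynomial.ext fun n => ?_
  rw [Polynomial.coeff_mul, Polynomial.coeff_mul]
  conv_rhs => rw [← Finset.HasAntidiagonal.map_swap_antidiagonal, Finset.sum_map]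
  refine Finset.sum_congr rfl fun p _ => ?_
  simp only [Function.Embedding.coeFn_mk, Prod.fst_swap, Prod.snd_swap, Polynomial.coeff_map]
  exact Algebra.commutes _ _

lemma normq_list (L : List (Polynomial DH)) :
    L.prod * pconj L.prod =
      ((L.map fun G => reP (G * pconj G)).prod).map (algebraMap DD DH) := by
  induction L with
  | nil => simp [pconj_one]
  | cons G T ih =>
    rw [List.prod_cons, pconj_mul, List.map_cons, List.prod_cons, Polynomial.map_mul]
    calc G * T.prod * (pconj T.prod * pconj G)
        = G * (T.prod * pconj T.prod) * pconj G := by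
          rw [mul_assoc G T.prod, ← mul_assoc T.prod, ← mul_assoc G]
      _ = G * ((T.map fun G => reP (G * pconj G)).prod).map (algebraMap DD DH) * pconj G := by
          rw [ih]
      _ = ((T.map fun G => reP (G * pconj G)).prod).map (algebraMap DD DH) * (G * pconj G) := by
          rw [← commute_mapDD, mul_assoc]
      _ = _ := by
          conv_lhs => rw [← normq_eq G]
          exact (commute_mapDD _ _).symm

end Aux2
section Aux3

open TrivSqZeroExt Quaternion Polynomial

/-- the primal-part ring hom on dual numbers -/
def fstH : DD →+* ℝ := (TrivSqZeroExt.fstHom ℝ ℝ ℝ : DD →ₐ[ℝ] ℝ).toRingHom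

@[simp] lemma fstH_apply (d : DD) : fstH d = fst d := rfl

lemma dvd_map_of_dvd {R S : Type*} [Semiring R] [Semiring S] (f : R →+* S)
    {a b : Polynomial R} (h : a ∣ b) : a.map f ∣ b.map f := by
  simpa using map_dvd (Polynomial.mapRingHom f) h

lemma DD_decomp (x : Polynomial DD) :
    ∃ r : Polynomial DD,
      x = (x.map fstH).map (algebraMap ℝ DD) + C (DualNumber.eps) * r := by
  refine ⟨∑ i ∈ x.support, C (TrivSqZeroExt.inl ((x.coeff i).snd) : DD) * X ^ i, ?_⟩
  refine Polynomial.ext fun n => ?_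
  rw [Polynomial.coeff_add, Polynomial.coeff_map, Polynomial.coeff_map, Polynomial.coeff_C_mul,
    coeff_supportSum x (fun d => (TrivSqZeroExt.inl d.snd : DD)) (by simp) n]
  refine (TrivSqZeroExt.ext ?_ ?_).symm <;>
    simp [TrivSqZeroExt.algebraMap_eq_inl', TrivSqZeroExt.fst_mul, TrivSqZeroExt.snd_mul,
      DualNumber.fst_eps, DualNumber.snd_eps]

lemma eps_sq_C : (C (DualNumber.eps) : Polynomial DD) * C (DualNumber.eps) = 0 := by
  rw [← Polynomial.C_mul, DualNumber.eps_mul_eps, Polynomial.C_0]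

lemma keyA (L : List (Polynomial DD)) :
    ∀ (c d : Polynomial ℝ), c ≠ 0 →
    (∀ q ∈ L, q.map fstH ≠ 0) →
    (∀ q ∈ L, d * q.map fstH ∣ c * (L.prod).map fstH) →
    (d ∣ c * (L.prod).map fstH) →
    d.map (algebraMap ℝ DD) ∣ (c.map (algebraMap ℝ DD)) * L.prod := by
  induction L with
  | nil =>
    intro c d hc h0 hdvd hd
    simp only [List.prod_nil, Polynomial.map_one, mul_one] at hd ⊢
    exact dvd_map_of_dvd (algebraMap ℝ DD) hd
  | cons q T ih =>
    intro c d hc h0 hdvd hd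
    have hq0 : q.map fstH ≠ 0 := h0 q (List.mem_cons_self)
    have hprod : ((q :: T).prod).map fstH = q.map fstH * (T.prod).map fstH := by
      rw [List.prod_cons, Polynomial.map_mul]
    have hdT : d ∣ c * (T.prod).map fstH := by
      have h1 : d * q.map fstH ∣ (c * (T.prod).map fstH) * q.map fstH := by
        have h2 := hdvd q (List.mem_cons_self)
        rw [hprod] at h2
        refine h2.trans (dvd_of_eq ?_)
        ring
      exact (mul_dvd_mul_iff_right hq0).mp h1
    have ihres := ih (c * q.map fstH) d (mul_ne_zero hc hq0)
      (fun q' hq' => h0 q' (List.mem_cons_of_mem q hq'))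
      (fun q' hq' => by
        have h2 := hdvd q' (List.mem_cons_of_mem q hq')
        rw [hprod] at h2
        refine h2.trans (dvd_of_eq ?_)
        ring)
      (by
        rw [hprod] at hd
        refine hd.trans (dvd_of_eq ?_)
        ring)
    obtain ⟨r, hqd⟩ := DD_decomp q
    obtain ⟨s, hTd⟩ := DD_decomp T.prod
    rw [List.prod_cons]
    have heps := eps_sq_C
    have main : (c.map (algebraMap ℝ DD)) * (q * T.prod) =
        ((c * q.map fstH).map (algebraMap ℝ DD)) * T.prod +
        ((c * (T.prod).map fstH).map (algebraMap ℝ DD)) * (C (DualNumber.eps) * r) := by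
      rw [Polynomial.map_mul, Polynomial.map_mul]
      linear_combination (c.map (algebraMap ℝ DD) * T.prod) * hqd +
        (c.map (algebraMap ℝ DD) * C (DualNumber.eps) * r) * hTd +
        (c.map (algebraMap ℝ DD) * r * s) * heps
    rw [main]
    refine dvd_add ihres (Dvd.dvd.mul_right ?_ _)
    exact dvd_map_of_dvd (algebraMap ℝ DD) hdT

end Aux3
section Aux4

open TrivSqZeroExt Quaternion Polynomial

lemma prime_pow_sub_one_dvd {α : Type*} [CommMonoidWithZero α] [IsCancelMulZero α] {p a b : α}
    (hp : Prime p) {n : ℕ} (h : p ^ n ∣ a * b) (ha : ¬ (p ^ 2 ∣ a)) : p ^ (n - 1) ∣ b := by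
  cases n with
  | zero => simpa using one_dvd b
  | succ n =>
    simp only [Nat.succ_sub_one]
    by_cases hpa : p ∣ a
    · obtain ⟨a', rfl⟩ := hpa
      have ha' : ¬ p ∣ a' := by
        rintro ⟨t, ht⟩
        exact ha ⟨t, by rw [ht, pow_two, mul_assoc]⟩
      have h2 : p ^ n ∣ a' * b := by
        have h3 : p * p ^ n ∣ p * (a' * b) := by
          rw [← pow_succ']
          exact h.trans (dvd_of_eq (mul_assoc p a' b))
        exact (mul_dvd_mul_iff_left hp.ne_zero).mp h3
      exact hp.pow_dvd_of_dvd_mul_left n ha' h2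
    · exact (pow_dvd_pow p n.le_succ).trans (hp.pow_dvd_of_dvd_mul_left (n + 1) hpa h)

lemma degree_pconj_le (G : Polynomial DH) : (pconj G).degree ≤ G.degree := by
  refine Polynomial.degree_le_iff_coeff_zero _ _ |>.mpr fun m hm => ?_
  rw [pconj_coeff, Polynomial.coeff_eq_zero_of_degree_lt hm]
  exact star_zero DH

lemma hom_compat : primalHom.comp (algebraMap DD DH) = (algebraMap ℝ HH).comp fstH := by
  refine RingHom.ext fun x => ?_
  show primal (algebraMap DD DH x) = algebraMap ℝ HH (fst x)
  ext <;> simp [primal, QuaternionAlgebra.algebraMap_eq]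

end Aux4
/-- If M is a product of linear dual quaternion polynomials with linear primal parts, and
N(P) = ∏ Nᵢ^{nᵢ}, then ∏ Nᵢ^{nᵢ−1} divides N(M). -/
theorem stmt13 (k : ℕ) (F : Fin k → Polynomial DH)
    (hdegF : ∀ j, (F j).degree = 1) (hdegP : ∀ j, (Ppart (F j)).degree = 1)
    (M : Polynomial DH) (hM : M = (List.ofFn F).prod)
    (m : ℕ) (N : Fin m → Polynomial ℝ) (n : Fin m → ℕ)
    (hmon : ∀ i, (N i).Monic) (hirr : ∀ i, Irreducible (N i)) (hdeg : ∀ i, (N i).degree = 2)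
    (hcop : ∀ i j, i ≠ j → IsCoprime (N i) (N j)) (hn : ∀ i, 0 < n i)
    (hNP : Ppart M * qpconj (Ppart M) = (∏ i, N i ^ n i).map (algebraMap ℝ HH)) :
    (∏ i, N i ^ (n i - 1)).map (algebraMap ℝ DH) ∣ M * pconj M := by
  classical
  set nq : Polynomial DH → Polynomial DD := fun G => reP (G * pconj G) with hnq
  set L : List (Polynomial DD) := (List.ofFn F).map nq with hL
  have hMP : M * pconj M = (L.prod).map (algebraMap DD DH) := by
    rw [hM]; exact normq_list (List.ofFn F)
  have hPc : Ppart (pconj M) = qpconj (Ppart M) :=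
    Polynomial.ext fun i => by
      rw [Ppart_coeff, pconj_coeff, qpconj_coeff, Ppart_coeff, primal_star]
  have hPP : (L.prod.map fstH).map (algebraMap ℝ HH) = Ppart M * qpconj (Ppart M) := by
    rw [← hPc, Ppart_eq_map, Ppart_eq_map, ← Polynomial.map_mul, hMP, Polynomial.map_map,
      Polynomial.map_map, hom_compat]
  have hNeq : L.prod.map fstH = ∏ i, N i ^ n i := by
    apply Polynomial.map_injective (algebraMap ℝ HH) (Quaternion.algebraMap_injective)
    rw [hPP, hNP]
  have hmonprod : (∏ i, N i ^ n i).Monic :=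
    Polynomial.monic_prod_of_monic _ _ fun i _ => (hmon i).pow _
  have hprime : ∀ i, Prime (N i) := fun i => (hirr i).prime
  have hLprodmap : (L.map (Polynomial.map fstH)).prod = L.prod.map fstH := by
    rw [← Polynomial.coe_mapRingHom, (map_list_prod (Polynomial.mapRingHom fstH) L).symm]
  have hmem : ∀ q ∈ L, ∃ j : Fin k, q = nq (F j) := by
    intro q hq
    rw [hL, List.mem_map] at hq
    obtain ⟨G, hG, rfl⟩ := hq
    rw [List.mem_ofFn] at hG
    obtain ⟨j, rfl⟩ := hG
    exact ⟨j, rfl⟩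
  have hqdvd : ∀ q ∈ L, q.map fstH ∣ ∏ i, N i ^ n i := by
    intro q hq
    rw [← hNeq, ← hLprodmap]
    exact List.dvd_prod (List.mem_map_of_mem hq)
  have hqne : ∀ q ∈ L, q.map fstH ≠ 0 := by
    intro q hq h0
    have hmem0 : (0 : Polynomial ℝ) ∈ L.map (Polynomial.map fstH) :=
      h0 ▸ List.mem_map_of_mem hq
    have h1 : (L.map (Polynomial.map fstH)).prod = 0 := List.prod_eq_zero hmem0
    rw [hLprodmap, hNeq] at h1
    exact hmonprod.ne_zero h1
  have hqdeg : ∀ q ∈ L, (q.map fstH).degree ≤ 2 := by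
    intro q hq
    obtain ⟨j, rfl⟩ := hmem q hq
    have e1 : ((nq (F j)).map (algebraMap DD DH)) = F j * pconj (F j) := normq_eq (F j)
    have e2 : (nq (F j)).degree = (F j * pconj (F j)).degree := by
      rw [← e1, Polynomial.degree_map_eq_of_injective (Quaternion.algebraMap_injective)]
    refine le_trans Polynomial.degree_map_le ?_
    rw [e2]
    refine le_trans (Polynomial.degree_mul_le _ _) ?_
    have h3 : (pconj (F j)).degree ≤ 1 := (degree_pconj_le (F j)).trans (le_of_eq (hdegF j))
    calc (F j).degree + (pconj (F j)).degree ≤ 1 + 1 :=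
          add_le_add (le_of_eq (hdegF j)) h3
      _ = 2 := by rfl
  have hddvd : ∀ q ∈ L, (∏ i, N i ^ (n i - 1)) * q.map fstH ∣ (∏ i, N i ^ n i) := by
    intro q hq
    obtain ⟨w, hw⟩ := hqdvd q hq
    have hdw : (∏ i, N i ^ (n i - 1)) ∣ w := by
      refine Finset.prod_dvd_of_coprime (fun i _ j _ hij => (hcop i j hij).pow) fun i _ => ?_
      refine prime_pow_sub_one_dvd (hprime i) (hw ▸ Finset.dvd_prod_of_mem _ (Finset.mem_univ i)) ?_
      intro hsq
      have h4 : ((N i) ^ 2).degree ≤ (q.map fstH).degree :=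
        Polynomial.degree_le_of_dvd hsq (hqne q hq)
      rw [Polynomial.degree_pow, hdeg i] at h4
      have h5 := le_trans h4 (hqdeg q hq)
      norm_num at h5
    calc (∏ i, N i ^ (n i - 1)) * q.map fstH ∣ w * q.map fstH := mul_dvd_mul_right hdw _
      _ = ∏ i, N i ^ n i := by rw [mul_comm]; exact hw.symm
  have hdd : (∏ i, N i ^ (n i - 1)) ∣ ∏ i, N i ^ n i :=
    Finset.prod_dvd_prod_of_dvd _ _ fun i _ => pow_dvd_pow _ (Nat.sub_le _ _)
  have key := keyA L 1 (∏ i, N i ^ (n i - 1)) one_ne_zero hqne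
    (fun q hq => by rw [one_mul, hNeq]; exact hddvd q hq)
    (by rw [one_mul, hNeq]; exact hdd)
  rw [Polynomial.map_one, one_mul] at key
  have final := dvd_map_of_dvd (algebraMap DD DH) key
  have hcomp2 : ((algebraMap DD DH : DD →+* DH).comp (algebraMap ℝ DD) : ℝ →+* DH) = algebraMap ℝ DH := by
    refine RingHom.ext fun x => ?_
    rfl
  rw [Polynomial.map_map, hcomp2] at final
  rw [hMP]
  exact final
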